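/- Let f ∈ k[x₁,…,xₙ] and g ∈ k[y₁,…,y_m] be polynomials vanishing at the origin. Then σ(fg) = min{σ(f), σ(g)}, where fg is viewed as a polynomial in k[x,y]. -/

import Mathlib

open MvPolynomial Pointwise

noncomputable def suppSet {ι k : Type*} [CommSemiring k] (f : MvPolynomial ι k) :
    Set (ι → ℝ) :=
  (fun d : ι →₀ ℕ => fun i => (d i : ℝ)) '' (f.support : Set (ι →₀ ℕ))

noncomputable def newton {ι k : Type*} [CommSemiring k] (f : MvPolynomial ι k) :
    Set (ι → ℝ) :=
  convexHull ℝ (suppSet f) + {x : ι → ℝ | ∀ i, 0 ≤ x i}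

noncomputable def sigmaP {ι k : Type*} [CommSemiring k] (f : MvPolynomial ι k) : ENNReal :=
  sSup {s : ENNReal | ∃ σ : ℝ, 0 < σ ∧ s = ENNReal.ofReal σ ∧ (fun _ : ι => 1 / σ) ∈ newton f}

noncomputable def NV {ι k : Type*} [Fintype ι] [CommSemiring k]
    (f : MvPolynomial ι k) (a : ι → ℝ) : ℝ :=
  sInf ((fun x => ∑ i, a i * x i) '' newton f)

noncomputable def meetLocus {ι k : Type*} [Fintype ι] [CommSemiring k]
    (f : MvPolynomial ι k) (a : ι → ℝ) : Set (ι → ℝ) :=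
  {x ∈ newton f | ∑ i, a i * x i = NV f a}

open Classical in
noncomputable def trunc {ι k : Type*} [CommSemiring k]
    (f : MvPolynomial ι k) (τ : Set (ι → ℝ)) : MvPolynomial ι k :=
  ∑ d ∈ f.support, if (fun i => (d i : ℝ)) ∈ τ then monomial d (f.coeff d) else 0

def nondegWrt {ι k : Type*} [Fintype ι] [Field k]
    (f : MvPolynomial ι k) (τ : Set (ι → ℝ)) : Prop :=
  ¬ ∃ x : ι → AlgebraicClosure k, (∀ i, x i ≠ 0) ∧
      ∀ i, eval x (pderiv i (map (algebraMap k (AlgebraicClosure k)) (trunc f τ))) = 0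

def weakNondegWrt {ι k : Type*} [Fintype ι] [Field k]
    (f : MvPolynomial ι k) (τ : Set (ι → ℝ)) : Prop :=
  ¬ ∃ x : ι → AlgebraicClosure k, (∀ i, x i ≠ 0) ∧
      eval x (map (algebraMap k (AlgebraicClosure k)) (trunc f τ)) = 0 ∧
      ∀ i, eval x (pderiv i (map (algebraMap k (AlgebraicClosure k)) (trunc f τ))) = 0

def isNondeg {ι k : Type*} [Fintype ι] [Field k] (f : MvPolynomial ι k) : Prop :=
  ∀ a : ι → ℝ, (∀ i, 0 ≤ a i) → nondegWrt f (meetLocus f a)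

section Aux
open Finsupp

variable {k : Type*} [CommRing k] [IsDomain k] {n m : ℕ}

noncomputable def Fmap (n m : ℕ) (x : (Fin n →₀ ℕ) × (Fin m →₀ ℕ)) : Fin (n+m) →₀ ℕ :=
  x.1.mapDomain (Fin.castAdd m) + x.2.mapDomain (Fin.natAdd n)

lemma natAdd_inj : Function.Injective (Fin.natAdd (m := m) n) :=
  fun a b h => by
    have := congrArg Fin.val h; simp at this; exact Fin.ext this

lemma castAdd_notin_range (j : Fin n) : (Fin.castAdd m j) ∉ Set.range (Fin.natAdd (m := m) n) := by
  rintro ⟨i, hi⟩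
  have := congrArg Fin.val hi
  simp at this
  omega

lemma natAdd_notin_range (j : Fin m) : (Fin.natAdd n j) ∉ Set.range (Fin.castAdd (n := n) m) := by
  rintro ⟨i, hi⟩
  have := congrArg Fin.val hi
  simp at this
  omega

lemma Fmap_castAdd (x) (j : Fin n) : Fmap n m x (Fin.castAdd m j) = x.1 j := by
  simp [Fmap, Finsupp.mapDomain_apply (Fin.castAdd_injective n m),
    Finsupp.mapDomain_notin_range _ _ (castAdd_notin_range j)]

lemma Fmap_natAdd (x) (j : Fin m) : Fmap n m x (Fin.natAdd n j) = x.2 j := by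
  simp [Fmap, Finsupp.mapDomain_apply natAdd_inj,
    Finsupp.mapDomain_notin_range _ _ (natAdd_notin_range j)]

lemma Fmap_inj : Function.Injective (Fmap n m) := by
  rintro ⟨a, b⟩ ⟨a', b'⟩ h
  have h1 : a = a' := by ext j; rw [← Fmap_castAdd (a,b) j, ← Fmap_castAdd (a',b') j, h]
  have h2 : b = b' := by ext j; rw [← Fmap_natAdd (a,b) j, ← Fmap_natAdd (a',b') j, h]
  simp [h1, h2]

lemma mul_rename_eq_sum (f : MvPolynomial (Fin n) k) (g : MvPolynomial (Fin m) k) :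
    (rename (Fin.castAdd m) f * rename (Fin.natAdd n) g)
      = ∑ x ∈ f.support ×ˢ g.support, monomial (Fmap n m x) (f.coeff x.1 * g.coeff x.2) := by
  classical
  conv_lhs => rw [← f.support_sum_monomial_coeff, ← g.support_sum_monomial_coeff]
  rw [map_sum, map_sum, Finset.sum_mul_sum, Finset.sum_product]
  refine Finset.sum_congr rfl fun a _ => Finset.sum_congr rfl fun b _ => ?_
  rw [rename_monomial, rename_monomial, monomial_mul]
  rfl

lemma support_mul_rename (f : MvPolynomial (Fin n) k) (g : MvPolynomial (Fin m) k) :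
    (rename (Fin.castAdd m) f * rename (Fin.natAdd n) g).support
      = (f.support ×ˢ g.support).image (Fmap n m) := by
  classical
  rw [mul_rename_eq_sum]
  rw [MvPolynomial.support, AddMonoidAlgebra.coeff_sum, Finsupp.support_sum_eq_biUnion]
  · ext d
    simp only [Finset.mem_biUnion, Finset.mem_image, Finset.mem_product]
    constructor
    · rintro ⟨x, hx, hd⟩
      have hd' : d ∈ (Finsupp.single (Fmap n m x) (f.coeff x.1 * g.coeff x.2)).support := hd
      rw [Finsupp.mem_support_single] at hd'
      exact ⟨x, by simpa using hx, hd'.1.symm⟩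
    · rintro ⟨x, hx, hd⟩
      simp only [Finset.mem_product, MvPolynomial.mem_support_iff] at hx
      refine ⟨x, by simpa using hx, ?_⟩
      show d ∈ (Finsupp.single (Fmap n m x) (f.coeff x.1 * g.coeff x.2)).support
      rw [Finsupp.mem_support_single]
      exact ⟨hd.symm, mul_ne_zero hx.1 hx.2⟩
  · intro x y hxy
    refine Finset.disjoint_left.mpr fun d hdx hdy => ?_
    have hdx' : d ∈ (Finsupp.single (Fmap n m x) (f.coeff x.1 * g.coeff x.2)).support := hdx
    have hdy' : d ∈ (Finsupp.single (Fmap n m y) (f.coeff y.1 * g.coeff y.2)).support := hdy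
    rw [Finsupp.mem_support_single] at hdx' hdy'
    exact hxy (Fmap_inj (hdx'.1 ▸ hdy'.1 ▸ rfl))

end Aux

noncomputable def Lmap (n m : ℕ) : ((Fin n → ℝ) × (Fin m → ℝ)) →ₗ[ℝ] (Fin (n+m) → ℝ) where
  toFun p i := Fin.addCases (motive := fun _ => ℝ) p.1 p.2 i
  map_add' p q := by
    funext i
    induction i using Fin.addCases with
    | left j => simp
    | right j => simp
  map_smul' c p := by
    funext i
    induction i using Fin.addCases with
    | left j => simp
    | right j => simp

lemma Lmap_castAdd {n m : ℕ} (p) (j : Fin n) : Lmap n m p (Fin.castAdd m j) = p.1 j := by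
  simp [Lmap]

lemma Lmap_natAdd {n m : ℕ} (p) (j : Fin m) : Lmap n m p (Fin.natAdd n j) = p.2 j := by
  simp [Lmap]

-- image of Minkowski sum
lemma image_add_set {n m : ℕ} (A B : Set ((Fin n → ℝ) × (Fin m → ℝ))) :
    Lmap n m '' (A + B) = Lmap n m '' A + Lmap n m '' B := by
  ext z
  simp only [Set.mem_image, Set.mem_add]
  constructor
  · rintro ⟨x, ⟨a, ha, b, hb, rfl⟩, rfl⟩
    exact ⟨_, ⟨a, ha, rfl⟩, _, ⟨b, hb, rfl⟩, (map_add _ _ _).symm⟩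
  · rintro ⟨_, ⟨a, ha, rfl⟩, _, ⟨b, hb, rfl⟩, rfl⟩
    exact ⟨a + b, ⟨a, ha, b, hb, rfl⟩, map_add _ _ _⟩

lemma prod_add_prod {n m : ℕ} (A C : Set (Fin n → ℝ)) (B D : Set (Fin m → ℝ)) :
    (A ×ˢ B) + (C ×ˢ D) = (A + C) ×ˢ (B + D) := by
  ext ⟨u, v⟩
  simp only [Set.mem_add, Set.mem_prod, Prod.exists]
  constructor
  · rintro ⟨a, b, ⟨ha, hb⟩, c, d, ⟨hc, hd⟩, h⟩
    obtain ⟨h1, h2⟩ := Prod.mk.injEq .. ▸ h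
    exact ⟨⟨a, ha, c, hc, by rw [← h1]⟩, ⟨b, hb, d, hd, by rw [← h2]⟩⟩
  · rintro ⟨⟨a, ha, c, hc, h1⟩, ⟨b, hb, d, hd, h2⟩⟩
    exact ⟨a, b, ⟨ha, hb⟩, c, d, ⟨hc, hd⟩, by rw [Prod.ext_iff]; exact ⟨h1, h2⟩⟩

lemma cone_eq_image {n m : ℕ} :
    {x : Fin (n+m) → ℝ | ∀ i, 0 ≤ x i} =
      Lmap n m '' (({x : Fin n → ℝ | ∀ i, 0 ≤ x i}) ×ˢ ({x : Fin m → ℝ | ∀ i, 0 ≤ x i})) := by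
  ext z
  constructor
  · intro hz
    refine ⟨(fun j => z (Fin.castAdd m j), fun j => z (Fin.natAdd n j)),
      ⟨fun j => hz _, fun j => hz _⟩, ?_⟩
    funext i
    induction i using Fin.addCases with
    | left j => rw [Lmap_castAdd]
    | right j => rw [Lmap_natAdd]
  · rintro ⟨⟨u, v⟩, ⟨hu, hv⟩, rfl⟩
    intro i
    induction i using Fin.addCases with
    | left j => rw [Lmap_castAdd]; exact hu j
    | right j => rw [Lmap_natAdd]; exact hv j

section Glue
variable {k : Type*} [CommRing k] [IsDomain k] {n m : ℕ}

lemma real_Fmap (x : (Fin n →₀ ℕ) × (Fin m →₀ ℕ)) :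
    (fun i => ((Fmap n m x) i : ℝ)) = Lmap n m (fun i => (x.1 i : ℝ), fun i => (x.2 i : ℝ)) := by
  funext i
  induction i using Fin.addCases with
  | left j => rw [Lmap_castAdd]; exact congrArg Nat.cast (Fmap_castAdd x j)
  | right j => rw [Lmap_natAdd]; exact congrArg Nat.cast (Fmap_natAdd x j)

lemma suppSet_mul (f : MvPolynomial (Fin n) k) (g : MvPolynomial (Fin m) k) :
    suppSet (rename (Fin.castAdd m) f * rename (Fin.natAdd n) g)
      = Lmap n m '' (suppSet f ×ˢ suppSet g) := by
  classical
  unfold suppSet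
  rw [support_mul_rename, Finset.coe_image, ← Set.image_comp,
    Set.prod_image_image_eq, ← Set.image_comp, Finset.coe_product]
  exact Set.image_congr fun x _ => real_Fmap x

lemma newton_mul (f : MvPolynomial (Fin n) k) (g : MvPolynomial (Fin m) k) :
    newton (rename (Fin.castAdd m) f * rename (Fin.natAdd n) g)
      = Lmap n m '' (newton f ×ˢ newton g) := by
  unfold newton
  rw [suppSet_mul, ← LinearMap.image_convexHull, convexHull_prod, cone_eq_image,
    ← image_add_set, prod_add_prod]

lemma const_mem_newton_mul (f : MvPolynomial (Fin n) k) (g : MvPolynomial (Fin m) k) (c : ℝ) :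
    ((fun _ : Fin (n+m) => c) ∈ newton (rename (Fin.castAdd m) f * rename (Fin.natAdd n) g))
      ↔ ((fun _ : Fin n => c) ∈ newton f ∧ (fun _ : Fin m => c) ∈ newton g) := by
  rw [newton_mul]
  constructor
  · rintro ⟨⟨u, v⟩, ⟨hu, hv⟩, h⟩
    have hu' : u = fun _ : Fin n => c := by
      funext j
      have := congrFun h (Fin.castAdd m j)
      rwa [Lmap_castAdd] at this
    have hv' : v = fun _ : Fin m => c := by
      funext j
      have := congrFun h (Fin.natAdd n j)
      rwa [Lmap_natAdd] at this
    exact ⟨hu' ▸ hu, hv' ▸ hv⟩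
  · rintro ⟨hu, hv⟩
    refine ⟨(fun _ => c, fun _ => c), ⟨hu, hv⟩, ?_⟩
    funext i
    induction i using Fin.addCases with
    | left j => rw [Lmap_castAdd]
    | right j => rw [Lmap_natAdd]

end Glue

section SSupStuff

-- upward closedness of newton polyhedra
lemma newton_upclosed {ι k : Type*} [CommSemiring k] (f : MvPolynomial ι k)
    {p q : ι → ℝ} (hp : p ∈ newton f) (hpq : ∀ i, p i ≤ q i) : q ∈ newton f := by
  obtain ⟨a, ha, b, hb, rfl⟩ := hp
  exact ⟨a, ha, b + (q - (a + b)), fun i => by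
    have := hb i; have := hpq i; simp only [Pi.add_apply, Pi.sub_apply] at *; linarith,
    by ring⟩

noncomputable def sigSet {ι k : Type*} [CommSemiring k] (f : MvPolynomial ι k) : Set ENNReal :=
  {s : ENNReal | ∃ σ : ℝ, 0 < σ ∧ s = ENNReal.ofReal σ ∧ (fun _ : ι => 1 / σ) ∈ newton f}

lemma sigmaP_eq_sSup_sigSet {ι k : Type*} [CommSemiring k] (f : MvPolynomial ι k) :
    sigmaP f = sSup (sigSet f) := rfl

lemma isLowerSet_sigSet {ι k : Type*} [CommSemiring k] (f : MvPolynomial ι k) :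
    IsLowerSet (sigSet f ∪ {0}) := by
  intro s t hts hs
  rcases eq_or_ne t 0 with rfl | ht
  · exact Or.inr rfl
  rcases hs with hs | hs
  · obtain ⟨σ, hσ, rfl, hmem⟩ := hs
    have htlt : t < ⊤ := lt_of_le_of_lt hts (by simp [ENNReal.ofReal_lt_top])
    refine Or.inl ⟨t.toReal, ?_, ?_, ?_⟩
    · exact ENNReal.toReal_pos ht htlt.ne
    · rw [ENNReal.ofReal_toReal htlt.ne]
    · refine newton_upclosed f hmem fun i => ?_
      have h1 : t.toReal ≤ σ := by
        rw [← ENNReal.ofReal_le_ofReal_iff hσ.le] at *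
        rwa [ENNReal.ofReal_toReal htlt.ne]
      have h2 : 0 < t.toReal := ENNReal.toReal_pos ht htlt.ne
      exact one_div_le_one_div_of_le h2 h1
  · simp only [Set.mem_singleton_iff] at hs
    exact absurd (le_antisymm (hs ▸ hts) (zero_le : (0:ENNReal) ≤ t)) ht

lemma sSup_inter_of_lower {A B : Set ENNReal} (hA : IsLowerSet A) (hB : IsLowerSet B) :
    sSup (A ∩ B) = sSup A ⊓ sSup B := by
  refine le_antisymm (le_inf (sSup_le_sSup Set.inter_subset_left)
    (sSup_le_sSup Set.inter_subset_right)) ?_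
  refine le_of_forall_lt fun c hc => ?_
  rw [lt_inf_iff] at hc
  obtain ⟨a, ha, hca⟩ := lt_sSup_iff.mp hc.1
  obtain ⟨b, hb, hcb⟩ := lt_sSup_iff.mp hc.2
  have : a ⊓ b ∈ A ∩ B := ⟨hA inf_le_left ha, hB inf_le_right hb⟩
  exact lt_of_lt_of_le (lt_inf_iff.mpr ⟨hca, hcb⟩) (le_sSup this)

lemma sSup_union_zero (A : Set ENNReal) : sSup (A ∪ {0}) = sSup A := by
  rw [sSup_union, sSup_singleton]
  simp

end SSupStuff

theorem stmt3 {k : Type*} [CommRing k] [IsDomain k] {n m : ℕ}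
    (f : MvPolynomial (Fin n) k) (g : MvPolynomial (Fin m) k)
    (hf : constantCoeff f = 0) (hg : constantCoeff g = 0) :
    sigmaP (rename (Fin.castAdd m) f * rename (Fin.natAdd n) g) =
      min (sigmaP f) (sigmaP g) := by
  have hset : sigSet (rename (Fin.castAdd m) f * rename (Fin.natAdd n) g)
      = sigSet f ∩ sigSet g := by
    ext s
    simp only [sigSet, Set.mem_setOf_eq, Set.mem_inter_iff]
    constructor
    · rintro ⟨σ, hσ, rfl, hmem⟩
      obtain ⟨h1, h2⟩ := (const_mem_newton_mul f g (1/σ)).mp hmem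
      exact ⟨⟨σ, hσ, rfl, h1⟩, ⟨σ, hσ, rfl, h2⟩⟩
    · rintro ⟨⟨σ, hσ, rfl, h1⟩, ⟨σ', hσ', hs, h2⟩⟩
      have hσσ : σ' = σ := by
        have := ENNReal.ofReal_eq_ofReal_iff hσ'.le hσ.le |>.mp hs.symm
        exact this
      refine ⟨σ, hσ, rfl, (const_mem_newton_mul f g (1/σ)).mpr ⟨h1, ?_⟩⟩
      rwa [hσσ] at h2
  rw [sigmaP_eq_sSup_sigSet, hset, sigmaP_eq_sSup_sigSet, sigmaP_eq_sSup_sigSet]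
  rw [← sSup_union_zero (sigSet f ∩ sigSet g), ← sSup_union_zero (sigSet f),
    ← sSup_union_zero (sigSet g)]
  have : (sigSet f ∩ sigSet g) ∪ {0} = (sigSet f ∪ {0}) ∩ (sigSet g ∪ {0}) := by
    ext s; by_cases h : s = 0 <;> simp [h]
  rw [this, sSup_inter_of_lower (isLowerSet_sigSet f) (isLowerSet_sigSet g)]
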